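/- Let f be a firm with strongly monotone responsive preferences and capacity c_f > p_f. Under the firm-proposing deferred acceptance algorithm, f can strictly improve by reducing its capacity if and only if the worker-optimal and firm-optimal stable matchings of the at-peak instance I^{p_f} assign different sets of workers to f; and when they differ, the improvement is achieved by reporting capacity exactly p_f. -/

import Mathlib

/-- A many-to-one matching instance: firms `F` with capacities, workers `W`,
strict preferences of workers over `Option F` (`none` = unmatched), strict
preferences of firms over individual workers (`Option W`, `none` = keeping a
seat empty) together with a responsive extension to sets of workers. -/
structure MTO (F W : Type) [DecidableEq W] where
  cap : F → ℕ
  /-- `wlt w a b` : worker `w` strictly prefers `a` to `b`. -/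
  wlt : W → Option F → Option F → Prop
  wlt_trans : ∀ w a b c, wlt w a b → wlt w b c → wlt w a c
  wlt_irrefl : ∀ w a, ¬ wlt w a a
  wlt_trichot : ∀ w a b, a = b ∨ wlt w a b ∨ wlt w b a
  /-- `flt1 f a b` : firm `f` strictly prefers (single) worker option `a` to `b`. -/
  flt1 : F → Option W → Option W → Prop
  flt1_trans : ∀ f a b c, flt1 f a b → flt1 f b c → flt1 f a c
  flt1_irrefl : ∀ f a, ¬ flt1 f a a
  flt1_trichot : ∀ f a b, a = b ∨ flt1 f a b ∨ flt1 f b a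
  /-- `flt f S T` : firm `f` strictly prefers the set `S` to the set `T`
  (responsive extension of `flt1`). -/
  flt : F → Finset W → Finset W → Prop
  flt_trans : ∀ f S T U, flt f S T → flt f T U → flt f S U
  flt_irrefl : ∀ f S, ¬ flt f S S
  resp_add : ∀ f (S : Finset W) (w : W), w ∉ S →
    (flt f (insert w S) S ↔ flt1 f (some w) none)
  resp_swap : ∀ f (S : Finset W) (w w' : W), w ∉ S → w' ∉ S → w ≠ w' →
    (flt f (insert w S) (insert w' S) ↔ flt1 f (some w) (some w'))

variable {F W : Type} [DecidableEq W] [DecidableEq F] [Fintype W]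

/-- The set of workers matched to firm `f` under the matching `μ`. -/
def matchedSet (μ : W → Option F) (f : F) : Finset W :=
  Finset.univ.filter (fun w => μ w = some f)

/-- `μ` respects all capacity constraints. -/
def MTO.isMatching (I : MTO F W) (μ : W → Option F) : Prop :=
  ∀ f, (matchedSet μ f).card ≤ I.cap f

/-- No agent is matched to an unacceptable partner. -/
def MTO.indivRational (I : MTO F W) (μ : W → Option F) : Prop :=
  (∀ w f, μ w = some f → ¬ I.wlt w none (some f)) ∧
  (∀ w f, μ w = some f → ¬ I.flt1 f none (some w))

/-- The worker-firm pair `(w, f)` blocks `μ`. -/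
def MTO.blocks (I : MTO F W) (μ : W → Option F) (w : W) (f : F) : Prop :=
  I.wlt w (some f) (μ w) ∧
  ∃ S ⊆ matchedSet μ f, (insert w S).card ≤ I.cap f ∧
    I.flt f (insert w S) (matchedSet μ f)

/-- Stability: a feasible, individually rational matching with no blocking pair. -/
def MTO.isStable (I : MTO F W) (μ : W → Option F) : Prop :=
  I.isMatching μ ∧ I.indivRational μ ∧ ∀ w f, ¬ I.blocks μ w f

/-- `μ` is the worker-optimal stable matching (output of WPDA). -/
def MTO.workerOptimal (I : MTO F W) (μ : W → Option F) : Prop :=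
  I.isStable μ ∧ ∀ μ', I.isStable μ' → ∀ w, μ' w = μ w ∨ I.wlt w (μ w) (μ' w)

/-- `μ` is the firm-optimal stable matching (output of FPDA). -/
def MTO.firmOptimal (I : MTO F W) (μ : W → Option F) : Prop :=
  I.isStable μ ∧ ∀ μ', I.isStable μ' → ∀ f,
    matchedSet μ' f = matchedSet μ f ∨ I.flt f (matchedSet μ f) (matchedSet μ' f)

/-- The instance obtained from `I` by setting the capacity of firm `f` to `b`. -/
def MTO.withCap (I : MTO F W) (f : F) (b : ℕ) : MTO F W :=
  { I with cap := Function.update I.cap f b }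

/-- The peak of firm `f`: the largest number of workers matched to `f` in any
stable matching for any choice of `f`'s capacity. -/
noncomputable def MTO.peak (I : MTO F W) (f : F) : ℕ :=
  sSup {n | ∃ b μ, (I.withCap f b).isStable μ ∧ (matchedSet μ f).card = n}

/-- `w` proposes to `f` at some point of WPDA, where `μ` is the worker-optimal
stable matching (i.e. the WPDA outcome): `w` finds `f` acceptable and `f` is
weakly preferred by `w` to its final WPDA match. -/
def MTO.proposesTo (I : MTO F W) (μ : W → Option F) (w : W) (f : F) : Prop :=
  I.wlt w (some f) none ∧ (μ w = some f ∨ I.wlt w (some f) (μ w))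

/-- All workers in `S` are acceptable to `f`. -/
def MTO.acceptableSet (I : MTO F W) (f : F) (S : Finset W) : Prop :=
  ∀ w ∈ S, ¬ I.flt1 f none (some w)

/-- Strongly monotone preferences: any larger acceptable set is strictly
preferred to any smaller acceptable set. -/
def MTO.stronglyMonotone (I : MTO F W) (f : F) : Prop :=
  ∀ S T : Finset W, I.acceptableSet f S → I.acceptableSet f T →
    T.card < S.card → I.flt f S T

set_option linter.unusedSectionVars false

section Aux

lemma MTO.flt_asymm (I : MTO F W) (f : F) {S T : Finset W}
    (h : I.flt f S T) : ¬ I.flt f T S :=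
  fun h' => I.flt_irrefl f S (I.flt_trans f S T S h h')

@[simp] lemma MTO.withCap_wlt (I : MTO F W) (f : F) (b : ℕ) :
    (I.withCap f b).wlt = I.wlt := rfl

@[simp] lemma MTO.withCap_flt1 (I : MTO F W) (f : F) (b : ℕ) :
    (I.withCap f b).flt1 = I.flt1 := rfl

@[simp] lemma MTO.withCap_flt (I : MTO F W) (f : F) (b : ℕ) :
    (I.withCap f b).flt = I.flt := rfl

lemma MTO.withCap_cap_self (I : MTO F W) (f : F) (b : ℕ) :
    (I.withCap f b).cap f = b := by
  simp [MTO.withCap]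

lemma MTO.withCap_cap_ne (I : MTO F W) (f : F) (b : ℕ) {g : F} (h : g ≠ f) :
    (I.withCap f b).cap g = I.cap g := by
  simp [MTO.withCap, Function.update_apply, h]

lemma MTO.withCap_self (I : MTO F W) (f : F) : I.withCap f (I.cap f) = I := by
  cases I
  simp [MTO.withCap, Function.update_eq_self]

lemma MTO.stable_down (I : MTO F W) (f : F) {b p : ℕ} {μ : W → Option F}
    (h : (I.withCap f b).isStable μ)
    (hcard : (matchedSet μ f).card ≤ p) (hpb : p ≤ b) :
    (I.withCap f p).isStable μ := by
  obtain ⟨hm, hir, hnb⟩ := h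
  refine ⟨?_, hir, ?_⟩
  · intro g
    by_cases hg : g = f
    · subst hg; rwa [MTO.withCap_cap_self]
    · rw [MTO.withCap_cap_ne I f p hg]
      have := hm g
      rwa [MTO.withCap_cap_ne I f b hg] at this
  · intro w g hblk
    refine hnb w g ?_
    obtain ⟨hw, S, hS, hcap, hflt⟩ := hblk
    refine ⟨hw, S, hS, ?_, hflt⟩
    by_cases hg : g = f
    · subst hg
      rw [MTO.withCap_cap_self] at hcap ⊢
      exact hcap.trans hpb
    · rw [MTO.withCap_cap_ne I f b hg]
      rwa [MTO.withCap_cap_ne I f p hg] at hcap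

lemma MTO.workerOpt_card_le (J : MTO F W) {μW μ' : W → Option F}
    (hW : J.workerOptimal μW) (h' : J.isStable μ') (g : F) :
    (matchedSet μW g).card ≤ (matchedSet μ' g).card := by
  by_contra hlt
  push_neg at hlt
  have hne : ¬ matchedSet μW g ⊆ matchedSet μ' g := by
    intro hsub
    exact absurd (Finset.card_le_card hsub) (by omega)
  obtain ⟨w, hw1, hw2⟩ := Finset.not_subset.mp hne
  have hμWw : μW w = some g := (Finset.mem_filter.mp hw1).2
  have hμ'w : μ' w ≠ some g := fun h => hw2 (Finset.mem_filter.mpr ⟨Finset.mem_univ w, h⟩)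
  have hpref : J.wlt w (some g) (μ' w) := by
    rcases hW.2 μ' h' w with h | h
    · rw [hμWw] at h; exact absurd h hμ'w
    · rwa [hμWw] at h
  have hacc : ¬ J.flt1 g none (some w) := hW.1.2.1.2 w g hμWw
  have hflt1 : J.flt1 g (some w) none := by
    rcases J.flt1_trichot g (some w) none with h | h | h
    · exact absurd h (by simp)
    · exact h
    · exact absurd h hacc
  refine h'.2.2 w g ⟨hpref, matchedSet μ' g, Finset.Subset.refl _, ?_, ?_⟩
  · rw [Finset.card_insert_of_notMem hw2]
    have := hW.1.1 g
    omega
  · exact (J.resp_add g _ w hw2).mpr hflt1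

lemma MTO.matched_mono (J : MTO F W) {μW μ' : W → Option F}
    (hW : J.workerOptimal μW) (h' : J.isStable μ')
    (w : W) (h : (μ' w).isSome) : (μW w).isSome := by
  obtain ⟨g, hg⟩ := Option.isSome_iff_exists.mp h
  rcases hW.2 μ' h' w with he | hlt
  · rw [← he]; exact h
  · cases hμW : μW w with
    | some g' => simp
    | none =>
      rw [hμW, hg] at hlt
      exact absurd hlt (h'.2.1.1 w g hg)

lemma card_matched_eq_sum (μ : W → Option F) (T : Finset F)
    (hT : ∀ w g, μ w = some g → g ∈ T) :
    (Finset.univ.filter (fun w => (μ w).isSome)).card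
      = ∑ g ∈ T, (matchedSet μ g).card := by
  rw [← Finset.card_biUnion]
  · congr 1
    ext w
    constructor
    · intro hw
      obtain ⟨g, hg⟩ := Option.isSome_iff_exists.mp (Finset.mem_filter.mp hw).2
      exact Finset.mem_biUnion.mpr ⟨g, hT w g hg,
        Finset.mem_filter.mpr ⟨Finset.mem_univ w, hg⟩⟩
    · intro hw
      obtain ⟨g, _, hg⟩ := Finset.mem_biUnion.mp hw
      exact Finset.mem_filter.mpr ⟨Finset.mem_univ w,
        Option.isSome_iff_exists.mpr ⟨g, (Finset.mem_filter.mp hg).2⟩⟩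
  · intro g hg g' hg' hne
    show Disjoint (matchedSet μ g) (matchedSet μ g')
    rw [Finset.disjoint_left]
    intro w hw hw'
    have h1 : μ w = some g := (Finset.mem_filter.mp hw).2
    have h2 : μ w = some g' := (Finset.mem_filter.mp hw').2
    rw [h1] at h2
    exact hne (Option.some_injective _ h2)

lemma MTO.card_eq_of_stable (J : MTO F W) {μW μ' : W → Option F}
    (hW : J.workerOptimal μW) (h' : J.isStable μ') (f : F) :
    (matchedSet μ' f).card = (matchedSet μW f).card := by
  refine le_antisymm ?_ (J.workerOpt_card_le hW h' f)
  by_contra hlt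
  push_neg at hlt
  set T : Finset F :=
    Finset.univ.biUnion (fun w => (μ' w).toFinset ∪ (μW w).toFinset) with hTdef
  have hT' : ∀ w g, μ' w = some g → g ∈ T := by
    intro w g h
    refine Finset.mem_biUnion.mpr ⟨w, Finset.mem_univ w, ?_⟩
    simp [h]
  have hTW : ∀ w g, μW w = some g → g ∈ T := by
    intro w g h
    refine Finset.mem_biUnion.mpr ⟨w, Finset.mem_univ w, ?_⟩
    simp [h]
  have hfT : f ∈ T := by
    have hpos : 0 < (matchedSet μ' f).card := by omega
    obtain ⟨w, hw⟩ := Finset.card_pos.mp hpos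
    exact hT' w f (Finset.mem_filter.mp hw).2
  have hsum1 := card_matched_eq_sum μ' T hT'
  have hsum2 := card_matched_eq_sum μW T hTW
  have hsub : (Finset.univ.filter (fun w => (μ' w).isSome)) ⊆
      (Finset.univ.filter (fun w => (μW w).isSome)) := by
    intro w hw
    exact Finset.mem_filter.mpr ⟨Finset.mem_univ w,
      J.matched_mono hW h' w (Finset.mem_filter.mp hw).2⟩
  have hle := Finset.card_le_card hsub
  have hstrict : ∑ g ∈ T, (matchedSet μW g).card < ∑ g ∈ T, (matchedSet μ' g).card :=
    Finset.sum_lt_sum (fun g _ => J.workerOpt_card_le hW h' g) ⟨f, hfT, hlt⟩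
  omega

end Aux
/-- For a firm with strongly monotone preferences and capacity above its peak,
under FPDA (which outputs the firm-optimal stable matching) the firm can
strictly improve by reducing its capacity iff the worker-optimal and
firm-optimal stable matchings of the at-peak instance assign it different sets
of workers; when they differ, reporting capacity exactly the peak achieves the
improvement. -/
theorem strongly_monotone_delete_above_peak_fpda_iff
    {F W : Type} [DecidableEq W] [DecidableEq F] [Fintype W]
    (I : MTO F W) (f : F)
    (hsm : I.stronglyMonotone f)
    (hpeak : I.peak f < I.cap f)
    (μ μW μF : W → Option F)
    (hμ : I.firmOptimal μ)
    (hW : (I.withCap f (I.peak f)).workerOptimal μW)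
    (hF : (I.withCap f (I.peak f)).firmOptimal μF) :
    ((∃ b < I.cap f, ∃ μb, (I.withCap f b).firmOptimal μb ∧
        I.flt f (matchedSet μb f) (matchedSet μ f)) ↔
      matchedSet μW f ≠ matchedSet μF f) ∧
    (matchedSet μW f ≠ matchedSet μF f →
      I.flt f (matchedSet μF f) (matchedSet μ f)) := by
  classical
  have hbdd : BddAbove {n | ∃ b μ', (I.withCap f b).isStable μ' ∧ (matchedSet μ' f).card = n} := by
    refine ⟨Fintype.card W, ?_⟩
    rintro n ⟨b, μ', _, rfl⟩
    exact le_trans (Finset.card_filter_le _ _) (le_of_eq Finset.card_univ)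
  have hμstab : I.isStable μ := hμ.1
  have hμcapf : (I.withCap f (I.cap f)).isStable μ := by
    rw [I.withCap_self f]; exact hμstab
  have hlepeak : ∀ b (μ'' : W → Option F), (I.withCap f b).isStable μ'' →
      (matchedSet μ'' f).card ≤ I.peak f :=
    fun b μ'' h => le_csSup hbdd ⟨b, μ'', h, rfl⟩
  have hμJ : (I.withCap f (I.peak f)).isStable μ :=
    I.stable_down f hμcapf (hlepeak _ μ hμcapf) hpeak.le
  have hmem : I.peak f ∈ {n | ∃ b μ', (I.withCap f b).isStable μ' ∧ (matchedSet μ' f).card = n} :=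
    Nat.sSup_mem ⟨_, ⟨I.cap f, μ, hμcapf, rfl⟩⟩ hbdd
  obtain ⟨b', μ', hμ'stab, hμ'card⟩ := hmem
  have hμ'J : (I.withCap f (I.peak f)).isStable μ' := by
    refine I.stable_down f hμ'stab (le_of_eq hμ'card) ?_
    have h1 := hμ'stab.1 f
    rw [I.withCap_cap_self] at h1
    omega
  have hcardμ : (matchedSet μ f).card = (matchedSet μW f).card :=
    (I.withCap f (I.peak f)).card_eq_of_stable hW hμJ f
  have hcardW : (matchedSet μW f).card = I.peak f := by
    have h2 := (I.withCap f (I.peak f)).card_eq_of_stable hW hμ'J f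
    omega
  have hsub : matchedSet μW f ⊆ matchedSet μ f := by
    intro w hw
    by_contra hw2
    have hμWw : μW w = some f := (Finset.mem_filter.mp hw).2
    have hμw : μ w ≠ some f := fun h => hw2 (Finset.mem_filter.mpr ⟨Finset.mem_univ w, h⟩)
    have hpref : I.wlt w (some f) (μ w) := by
      rcases hW.2 μ hμJ w with h | h
      · rw [hμWw] at h; exact absurd h hμw
      · rw [hμWw] at h; exact h
    have hacc : ¬ I.flt1 f none (some w) := hW.1.2.1.2 w f hμWw
    have hflt1 : I.flt1 f (some w) none := by
      rcases I.flt1_trichot f (some w) none with h | h | h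
      · exact absurd h (by simp)
      · exact h
      · exact absurd h hacc
    refine hμstab.2.2 w f ⟨hpref, matchedSet μ f, Finset.Subset.refl _, ?_, ?_⟩
    · rw [Finset.card_insert_of_notMem hw2]
      have h1 := hlepeak _ μ hμcapf
      omega
    · exact (I.resp_add f _ w hw2).mpr hflt1
  have hkey : matchedSet μW f = matchedSet μ f :=
    Finset.eq_of_subset_of_card_le hsub (le_of_eq hcardμ)
  have part2 : matchedSet μW f ≠ matchedSet μF f →
      I.flt f (matchedSet μF f) (matchedSet μ f) := by
    intro hne
    rcases hF.2 μ hμJ f with h | h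
    · exact absurd (hkey.trans h) hne
    · exact h
  refine ⟨⟨?_, fun hne => ⟨I.peak f, hpeak, μF, hF, part2 hne⟩⟩, part2⟩
  rintro ⟨b, hb, μb, hμbOpt, himp⟩
  intro heq
  have hμbStab := hμbOpt.1
  by_cases hbp : I.peak f ≤ b
  · have hμbJ : (I.withCap f (I.peak f)).isStable μb :=
      I.stable_down f hμbStab (hlepeak _ _ hμbStab) hbp
    rcases hF.2 μb hμbJ f with h | h
    · rw [h, ← heq, hkey] at himp
      exact I.flt_irrefl f _ himp
    · have hFeq : matchedSet μF f = matchedSet μ f := by rw [← heq]; exact hkey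
      rw [hFeq] at h
      exact I.flt_asymm f himp h
  · push_neg at hbp
    have hcardb : (matchedSet μb f).card ≤ b := by
      have h1 := hμbStab.1 f
      rwa [I.withCap_cap_self] at h1
    have hlt : (matchedSet μb f).card < (matchedSet μ f).card := by omega
    have haccμ : I.acceptableSet f (matchedSet μ f) := fun w hw =>
      hμstab.2.1.2 w f (Finset.mem_filter.mp hw).2
    have haccb : I.acceptableSet f (matchedSet μb f) := fun w hw =>
      hμbStab.2.1.2 w f (Finset.mem_filter.mp hw).2
    exact I.flt_asymm f himp (hsm _ _ haccμ haccb hlt)
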